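/- Suppose V : ℝ^n → ℝ is C¹, V(x_e) = 0, V(x) > 0 for x ≠ x_e in an open neighborhood Ω of x_e, and the Lie derivative ⟨∇V(x), f(x)⟩ < 0 for all x ∈ Ω \ {x_e}, where f is locally Lipschitz with f(x_e) = 0. Then x_e is asymptotically stable for ẋ = f(x). -/

import Mathlib

open Metric Set Filter

section Aux

variable {E : Type*} [NormedAddCommGroup E] [NormedSpace ℝ E]

lemma lyap_hasDerivAt (V : E → ℝ) (f : E → E) (hV : ContDiff ℝ 1 V)
    (x : ℝ → E) (hx : ∀ t, HasDerivAt x (f (x t)) t) (t : ℝ) :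
    HasDerivAt (fun s => V (x s)) (fderiv ℝ V (x t) (f (x t))) t :=
  ((hV.differentiable one_ne_zero (x t)).hasFDerivAt).comp_hasDerivAt t (hx t)

lemma lyap_mono (V : E → ℝ) (f : E → E) (xe : E) (Ω : Set E)
    (hV : ContDiff ℝ 1 V) (hfe : f xe = 0)
    (hLie : ∀ y ∈ Ω, y ≠ xe → fderiv ℝ V y (f y) < 0)
    (x : ℝ → E) (hx : ∀ t, HasDerivAt x (f (x t)) t)
    {s t : ℝ} (hst : s ≤ t) (hmem : ∀ u ∈ Icc s t, x u ∈ Ω) :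
    V (x t) ≤ V (x s) := by
  have hle : ∀ y ∈ Ω, fderiv ℝ V y (f y) ≤ 0 := by
    intro y hy
    by_cases h : y = xe
    · subst h; simp [hfe]
    · exact (hLie y hy h).le
  have hxc : Continuous x := Differentiable.continuous fun u => (hx u).differentiableAt
  have hanti : AntitoneOn (fun u => V (x u)) (Icc s t) := by
    apply antitoneOn_of_deriv_nonpos (convex_Icc s t)
    · exact (hV.continuous.comp hxc).continuousOn
    · intro u _
      exact ((lyap_hasDerivAt V f hV x hx u).differentiableAt).differentiableWithinAt
    · intro u hu
      rw [(lyap_hasDerivAt V f hV x hx u).deriv]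
      exact hle _ (hmem u (interior_subset hu))
  exact hanti ⟨le_rfl, hst⟩ ⟨hst, le_rfl⟩ hst

lemma lyap_invariant (V : E → ℝ) (f : E → E) (xe : E) (Ω : Set E)
    (hV : ContDiff ℝ 1 V) (hfe : f xe = 0)
    (hLie : ∀ y ∈ Ω, y ≠ xe → fderiv ℝ V y (f y) < 0)
    {r m : ℝ} (hr : 0 < r) (hsub : closedBall xe r ⊆ Ω)
    (hm : ∀ y, ‖y - xe‖ = r → m ≤ V y)
    (x : ℝ → E) (hx : ∀ t, HasDerivAt x (f (x t)) t)
    (hx0 : ‖x 0 - xe‖ < r) (hV0 : V (x 0) < m) :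
    ∀ t ≥ (0 : ℝ), ‖x t - xe‖ < r := by
  have hxc : Continuous x := Differentiable.continuous fun u => (hx u).differentiableAt
  by_contra hcon
  push_neg at hcon
  obtain ⟨t1, ht1, hge⟩ := hcon
  set S : Set ℝ := {t | 0 ≤ t} ∩ {t | r ≤ ‖x t - xe‖} with hSdef
  have hSne : S.Nonempty := ⟨t1, ht1, hge⟩
  have hSclosed : IsClosed S :=
    IsClosed.inter isClosed_Ici
      (isClosed_le continuous_const ((hxc.sub continuous_const).norm))
  have hSbdd : BddBelow S := ⟨0, fun t ht => ht.1⟩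
  set t0 := sInf S with ht0def
  have ht0S : t0 ∈ S := hSclosed.csInf_mem hSne hSbdd
  have ht0nn : 0 ≤ t0 := ht0S.1
  have ht0pos : 0 < t0 := by
    rcases ht0nn.lt_or_eq with h | h
    · exact h
    · exfalso; rw [← h] at ht0S; exact absurd ht0S.2 (not_le.2 hx0)
  have hC : IsClosed {u : ℝ | ‖x u - xe‖ ≤ r} :=
    isClosed_le ((hxc.sub continuous_const).norm) continuous_const
  have hIco : Ico 0 t0 ⊆ {u : ℝ | ‖x u - xe‖ ≤ r} := by
    intro u hu
    have huS : u ∉ S := fun h => absurd (csInf_le hSbdd h) (not_le.2 hu.2)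
    have : ¬ r ≤ ‖x u - xe‖ := fun h => huS ⟨hu.1, h⟩
    exact (not_le.1 this).le
  have hclaim : ∀ u ∈ Icc 0 t0, ‖x u - xe‖ ≤ r := by
    intro u hu
    have : Icc 0 t0 ⊆ {u : ℝ | ‖x u - xe‖ ≤ r} := by
      rw [← closure_Ico ht0pos.ne]
      exact closure_minimal hIco hC
    exact this hu
  have hmemΩ : ∀ u ∈ Icc 0 t0, x u ∈ Ω := fun u hu =>
    hsub (mem_closedBall_iff_norm.2 (hclaim u hu))
  have h1 : V (x t0) ≤ V (x 0) :=
    lyap_mono V f xe Ω hV hfe hLie x hx ht0nn hmemΩ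
  have h2 : ‖x t0 - xe‖ = r := le_antisymm (hclaim t0 ⟨ht0nn, le_rfl⟩) ht0S.2
  have h3 : m ≤ V (x t0) := hm _ h2
  linarith

end Aux

theorem stmt_3 {n : ℕ} (f : (Fin n → ℝ) → (Fin n → ℝ))
    (V : (Fin n → ℝ) → ℝ) (xe : Fin n → ℝ)
    (Ω : Set (Fin n → ℝ)) (hΩ : IsOpen Ω) (hxe : xe ∈ Ω)
    (hV : ContDiff ℝ 1 V) (hVe : V xe = 0)
    (hVpos : ∀ x ∈ Ω, x ≠ xe → 0 < V x)
    (hLie : ∀ x ∈ Ω, x ≠ xe → fderiv ℝ V x (f x) < 0)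
    (hf : LocallyLipschitz f) (hfe : f xe = 0) :
    (∀ ε > 0, ∃ δ > 0, ∀ x : ℝ → (Fin n → ℝ),
      (∀ t, HasDerivAt x (f (x t)) t) → ‖x 0 - xe‖ < δ →
      ∀ t ≥ (0 : ℝ), ‖x t - xe‖ < ε) ∧
    (∃ δ > 0, ∀ x : ℝ → (Fin n → ℝ),
      (∀ t, HasDerivAt x (f (x t)) t) → ‖x 0 - xe‖ < δ →
      Filter.Tendsto x Filter.atTop (nhds xe)) := by
  rcases subsingleton_or_nontrivial (Fin n → ℝ) with hs | hs
  · constructor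
    · intro ε hε
      refine ⟨1, one_pos, fun x _ _ t _ => ?_⟩
      have : x t - xe = 0 := Subsingleton.elim _ _
      simpa [this] using hε
    · refine ⟨1, one_pos, fun x _ _ => ?_⟩
      have : x = fun _ => xe := funext fun t => Subsingleton.elim _ _
      rw [this]; exact tendsto_const_nhds
  -- Key construction: for any ε > 0 produce δ and an invariant radius r.
  have key : ∀ ε > (0:ℝ), ∃ δ > (0:ℝ), ∃ r > (0:ℝ), δ ≤ r ∧ r ≤ ε ∧
      closedBall xe r ⊆ Ω ∧
      ∀ x : ℝ → (Fin n → ℝ), (∀ t, HasDerivAt x (f (x t)) t) →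
        ‖x 0 - xe‖ < δ → ∀ t ≥ (0:ℝ), ‖x t - xe‖ < r := by
    intro ε hε
    obtain ⟨r0, hr0, hball⟩ := Metric.isOpen_iff.1 hΩ xe hxe
    set r : ℝ := min (r0 / 2) ε with hrdef
    have hr : 0 < r := lt_min (by linarith) hε
    have hrr0 : r < r0 := lt_of_le_of_lt (min_le_left _ _) (by linarith)
    have hsub : closedBall xe r ⊆ Ω :=
      (closedBall_subset_ball hrr0).trans hball
    obtain ⟨z, hz, hzmin⟩ := (isCompact_sphere xe r).exists_isMinOn
      (NormedSpace.sphere_nonempty.2 hr.le) hV.continuous.continuousOn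
    have hzn : ‖z - xe‖ = r := mem_sphere_iff_norm.1 hz
    have hzΩ : z ∈ Ω := hsub (mem_closedBall_iff_norm.2 hzn.le)
    have hzne : z ≠ xe := by
      intro h; rw [h] at hzn; simp at hzn; exact hr.ne' hzn.symm
    set m := V z with hmdef
    have hm : 0 < m := hVpos z hzΩ hzne
    have hopen : IsOpen {y | V y < m} := isOpen_lt hV.continuous continuous_const
    have hxein : xe ∈ {y | V y < m} := by simp only [mem_setOf_eq, hVe]; exact hm
    obtain ⟨δ1, hδ1, hδball⟩ := Metric.isOpen_iff.1 hopen xe hxein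
    refine ⟨min δ1 r, lt_min hδ1 hr, r, hr, min_le_right _ _, min_le_right _ _, hsub, ?_⟩
    intro x hx hx0
    apply lyap_invariant V f xe Ω hV hfe hLie hr hsub
      (fun y hy => isMinOn_iff.1 hzmin y (mem_sphere_iff_norm.2 hy)) x hx
      (lt_of_lt_of_le hx0 (min_le_right _ _))
    have : x 0 ∈ ball xe δ1 :=
      mem_ball_iff_norm.2 (lt_of_lt_of_le hx0 (min_le_left _ _))
    exact hδball this
  constructor
  · intro ε hε
    obtain ⟨δ, hδ, r, hr, hδr, hrε, hsub, hinv⟩ := key ε hε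
    exact ⟨δ, hδ, fun x hx hx0 t ht => lt_of_lt_of_le (hinv x hx hx0 t ht) hrε⟩
  · obtain ⟨δ, hδ, r, hr, hδr, _, hsub, hinv⟩ := key 1 one_pos
    refine ⟨δ, hδ, fun x hx hx0 => ?_⟩
    have hxc : Continuous x := Differentiable.continuous fun u => (hx u).differentiableAt
    have htraj : ∀ t ≥ (0:ℝ), ‖x t - xe‖ < r := hinv x hx hx0
    have hΩt : ∀ t ≥ (0:ℝ), x t ∈ Ω := fun t ht =>
      hsub (mem_closedBall_iff_norm.2 (htraj t ht).le)
    set g : ℝ → ℝ := fun t => V (x (max t 0)) with hgdef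
    have hganti : Antitone g := by
      intro a b hab
      apply lyap_mono V f xe Ω hV hfe hLie x hx (max_le_max hab le_rfl)
      intro u hu
      exact hΩt u (le_trans (le_max_right a 0) hu.1)
    have hVnn : ∀ t ≥ (0:ℝ), 0 ≤ V (x t) := by
      intro t ht
      by_cases h : x t = xe
      · rw [h, hVe]
      · exact (hVpos _ (hΩt t ht) h).le
    have hg0 : ∀ t, 0 ≤ g t := fun t => hVnn _ (le_max_right t 0)
    have hbdd : BddBelow (range g) := ⟨0, by rintro _ ⟨t, rfl⟩; exact hg0 t⟩
    set c := ⨅ t, g t with hcdef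
    have hgc : Tendsto g atTop (nhds c) := tendsto_atTop_ciInf hganti hbdd
    have hcle : ∀ t, c ≤ g t := fun t => ciInf_le hbdd t
    have hc0 : 0 ≤ c := le_ciInf hg0
    have hgt : ∀ t ≥ (0:ℝ), g t = V (x t) := by
      intro t ht; simp [hgdef, max_eq_left ht]
    -- c = 0
    have hczero : c = 0 := by
      by_contra hcne
      have hcpos : 0 < c := lt_of_le_of_ne hc0 (Ne.symm hcne)
      have hopen : IsOpen {y | V y < c} := isOpen_lt hV.continuous continuous_const
      have hxein : xe ∈ {y | V y < c} := by simp only [mem_setOf_eq, hVe]; exact hcpos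
      obtain ⟨ρ, hρ, hρball⟩ := Metric.isOpen_iff.1 hopen xe hxein
      have hfar : ∀ t ≥ (0:ℝ), ρ ≤ ‖x t - xe‖ := by
        intro t ht
        by_contra hlt
        have : x t ∈ ball xe ρ := mem_ball_iff_norm.2 (not_le.1 hlt)
        have hVlt : V (x t) < c := hρball this
        rw [← hgt t ht] at hVlt
        exact absurd (hcle t) (not_le.2 hVlt)
      set K : Set (Fin n → ℝ) := closedBall xe r \ ball xe ρ with hKdef
      have hKcomp : IsCompact K := (isCompact_closedBall xe r).diff isOpen_ball
      have hxtK : ∀ t ≥ (0:ℝ), x t ∈ K := by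
        intro t ht
        refine ⟨mem_closedBall_iff_norm.2 (htraj t ht).le, fun h => ?_⟩
        exact absurd (hfar t ht) (not_le.2 (mem_ball_iff_norm.1 h))
      have hKne : K.Nonempty := ⟨x 0, hxtK 0 le_rfl⟩
      set W : (Fin n → ℝ) → ℝ := fun y => fderiv ℝ V y (f y) with hWdef
      have hWcont : Continuous W :=
        (hV.continuous_fderiv one_ne_zero).clm_apply hf.continuous
      obtain ⟨z, hzK, hzmax⟩ := hKcomp.exists_isMaxOn hKne hWcont.continuousOn
      have hzΩ : z ∈ Ω := hsub hzK.1
      have hzne : z ≠ xe := by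
        intro h
        apply hzK.2
        rw [h]; exact mem_ball_self hρ
      have ha : 0 < -W z := neg_pos.2 (hLie z hzΩ hzne)
      set a := -W z with hadef
      have hWle : ∀ t ≥ (0:ℝ), W (x t) ≤ -a := by
        intro t ht
        have := isMaxOn_iff.1 hzmax _ (hxtK t ht)
        simpa [hadef] using this
      -- φ t = V (x t) + a * t is antitone on [0, ∞)
      have hφanti : AntitoneOn (fun t => V (x t) + a * t) (Ici 0) := by
        apply antitoneOn_of_deriv_nonpos (convex_Ici 0)
        · exact ((hV.continuous.comp hxc).add (continuous_const.mul continuous_id)).continuousOn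
        · intro u _
          exact (((lyap_hasDerivAt V f hV x hx u).add
            ((hasDerivAt_id u).const_mul a)).differentiableAt).differentiableWithinAt
        · intro u hu
          rw [interior_Ici] at hu
          have hd : HasDerivAt (fun t => V (x t) + a * t) (W (x u) + a * 1) u :=
            (lyap_hasDerivAt V f hV x hx u).add ((hasDerivAt_id u).const_mul a)
          rw [hd.deriv, mul_one]
          have := hWle u hu.le
          linarith
      have hbound : ∀ t ≥ (0:ℝ), V (x t) + a * t ≤ V (x 0) := by
        intro t ht
        have := hφanti (self_mem_Ici) (mem_Ici.2 ht) ht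
        simpa using this
      set T := (V (x 0) - c) / a + 1 with hTdef
      have hT : 0 ≤ T := by
        have h1 : 0 ≤ (V (x 0) - c) / a := by
          apply div_nonneg _ ha.le
          have := hcle 0
          rw [hgt 0 le_rfl] at this
          linarith
        rw [hTdef]
        linarith
      have h1 : c ≤ V (x T) := by
        have := hcle T
        rwa [hgt T hT] at this
      have h2 : V (x T) + a * T ≤ V (x 0) := hbound T hT
      have h3 : a * T = V (x 0) - c + a := by
        rw [hTdef, mul_add, mul_one, mul_div_cancel₀ _ ha.ne']
      linarith
    rw [hczero] at hgc
    have hVt : Tendsto (fun t => V (x t)) atTop (nhds 0) := by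
      apply hgc.congr'
      filter_upwards [eventually_ge_atTop (0:ℝ)] with t ht
      exact hgt t ht
    rw [Metric.tendsto_nhds]
    intro ε' hε'
    set ε'' := min ε' r with hε''def
    have hε''pos : 0 < ε'' := lt_min hε' hr
    by_cases hA : (closedBall xe r \ ball xe ε'').Nonempty
    · obtain ⟨w, hwA, hwmin⟩ := ((isCompact_closedBall xe r).diff isOpen_ball).exists_isMinOn
        hA hV.continuous.continuousOn
      have hwΩ : w ∈ Ω := hsub hwA.1
      have hwne : w ≠ xe := by
        intro h; apply hwA.2; rw [h]; exact mem_ball_self hε''pos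
      have hm' : 0 < V w := hVpos w hwΩ hwne
      filter_upwards [hVt.eventually (gt_mem_nhds hm'), eventually_ge_atTop (0:ℝ)]
        with t hVlt ht
      have hxtcb : x t ∈ closedBall xe r := mem_closedBall_iff_norm.2 (htraj t ht).le
      have hnotA : x t ∉ closedBall xe r \ ball xe ε'' := by
        intro h
        exact absurd (isMinOn_iff.1 hwmin _ h) (not_le.2 hVlt)
      have : x t ∈ ball xe ε'' := by
        by_contra h
        exact hnotA ⟨hxtcb, h⟩
      exact lt_of_lt_of_le (mem_ball.1 this) (min_le_left _ _)
    · filter_upwards [eventually_ge_atTop (0:ℝ)] with t ht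
      have hxtcb : x t ∈ closedBall xe r := mem_closedBall_iff_norm.2 (htraj t ht).le
      have : x t ∈ ball xe ε'' := by
        by_contra h
        exact hA ⟨x t, hxtcb, h⟩
      exact lt_of_lt_of_le (mem_ball.1 this) (min_le_left _ _)
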